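/- Let R ⊆ k[[t]] be a k-subalgebra with conductor degree c_R (least c with t^c·k[[t]] ⊆ R), 𝔪 = R ∩ t·k[[t]], a_n = max(v(𝔪)\v(𝔪²)), and d = max{a_n + 1, c_R}. If y₁,…,y_n generate 𝔪 and ỹᵢ denotes the truncation of yᵢ at degree d (deleting all terms of order ≥ d), then each ỹᵢ ∈ R and ỹ₁,…,ỹ_n generate 𝔪. In particular, 𝔪 is generated by polynomials in t. -/

import Mathlib

set_option synthInstance.maxHeartbeats 1000000
set_option maxHeartbeats 1000000

open PowerSeries

/-- The maximal ideal `𝔪 = R ∩ t·k[[t]]` of a subalgebra `R ⊆ k[[t]]`, i.e. the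
elements of `R` with zero constant coefficient (equivalently, positive order). -/
noncomputable def mIdeal {k : Type*} [Field k] (R : Subalgebra k (PowerSeries k)) : Ideal R :=
  RingHom.ker ((constantCoeff : PowerSeries k →+* k).comp R.subtype)

/-- The set of valuations `v(I)` of the nonzero elements of an ideal `I ⊆ R ⊆ k[[t]]`.
(Note `f.order = n` with `n : ℕ` forces `f ≠ 0`, since the zero series has order `⊤`.) -/
def vset {k : Type*} [Field k] {R : Subalgebra k (PowerSeries k)} (I : Ideal R) : Set ℕ :=
  {n | ∃ f ∈ I, (f : PowerSeries k).order = (n : ℕ∞)}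

section Aux

variable {k : Type*} [Field k] {R : Subalgebra k (PowerSeries k)}

lemma mem_mIdeal_iff' {f : R} : f ∈ mIdeal R ↔ constantCoeff (f : PowerSeries k) = 0 := by
  simp [mIdeal, RingHom.mem_ker]

/-- `1 + m` is a unit of `R` whenever `m ∈ 𝔪`, via a truncated geometric series and the
conductor hypothesis. -/
lemma isUnit_one_add' {c : ℕ} (hcond : ∀ f : PowerSeries k, (X : PowerSeries k) ^ c * f ∈ R)
    {m : R} (hm : m ∈ mIdeal R) : IsUnit (1 + m) := by
  have hm0 : constantCoeff (m : PowerSeries k) = 0 := mem_mIdeal_iff'.mp hm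
  have hX : (X : PowerSeries k) ∣ (m : PowerSeries k) := X_dvd_iff.mpr hm0
  obtain ⟨h, hh⟩ := hX
  have hu : constantCoeff ((1 : PowerSeries k) + (m : PowerSeries k)) ≠ 0 := by simp [hm0]
  set u : PowerSeries k := (1 : PowerSeries k) + m with hu_def
  have hq : (X : PowerSeries k) ^ c * ((-1)^c * h ^ c * u⁻¹) ∈ R := hcond _
  have hqeq : (X : PowerSeries k) ^ c * ((-1)^c * h ^ c * u⁻¹)
      = (-(m : PowerSeries k))^c * u⁻¹ := by
    rw [hh]; ring
  set P : R := ∑ j ∈ Finset.range c, (-m)^j with hP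
  set Q : R := ⟨(-(m : PowerSeries k))^c * u⁻¹, hqeq ▸ hq⟩ with hQ
  refine IsUnit.of_mul_eq_one (a := 1 + m) (P + Q) ?_
  apply Subtype.ext
  rw [hP, hQ]
  push_cast [AddSubmonoidClass.coe_finset_sum]
  have hgeo := geom_sum_mul (-(m : PowerSeries k)) c
  have huinv : u * u⁻¹ = 1 := PowerSeries.mul_inv_cancel _ hu
  calc ((1 : PowerSeries k) + m) *
        ((∑ j ∈ Finset.range c, (-(m:PowerSeries k))^j) + (-(m : PowerSeries k))^c * u⁻¹)
      = -((∑ j ∈ Finset.range c, (-(m:PowerSeries k))^j) * (-(m:PowerSeries k) - 1))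
          + (-(m:PowerSeries k))^c * (u * u⁻¹) := by
        rw [hu_def]; ring
    _ = 1 := by rw [hgeo, huinv]; ring

/-- Key step: elements of `𝔪` divisible by `X^(max (aₙ+1) (2c-m))` lie in `𝔪²`. -/
lemma key_sq' {c : ℕ} (hc1 : 1 ≤ c)
    (hcond : ∀ f : PowerSeries k, (X : PowerSeries k) ^ c * f ∈ R)
    {aₙ : ℕ} (han : IsGreatest (vset (mIdeal R) \ vset ((mIdeal R) ^ 2)) aₙ)
    (m : ℕ) :
    ∀ f : R, f ∈ mIdeal R → (X : PowerSeries k) ^ (max (aₙ+1) (2*c - m)) ∣ (f : PowerSeries k) →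
      f ∈ (mIdeal R) ^ 2 := by
  induction m with
  | zero =>
    intro f hf hdvd
    have h2c : (X : PowerSeries k) ^ (2*c) ∣ (f : PowerSeries k) :=
      dvd_trans (pow_dvd_pow _ (by omega)) hdvd
    obtain ⟨g, hg⟩ := h2c
    set u : R := ⟨(X : PowerSeries k) ^ c, by simpa using hcond 1⟩ with hu
    set w : R := ⟨(X : PowerSeries k) ^ c * g, hcond g⟩ with hw
    have hfu : f = u * w := by
      apply Subtype.ext
      push_cast
      rw [hg, two_mul, pow_add]; ring
    have hum : u ∈ mIdeal R := by
      rw [mem_mIdeal_iff']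
      simp [hu, constantCoeff_X, zero_pow (by omega : c ≠ 0)]
    have hwm : w ∈ mIdeal R := by
      rw [mem_mIdeal_iff']
      simp [hw, constantCoeff_X, zero_pow (by omega : c ≠ 0)]
    rw [hfu, pow_two]
    exact Ideal.mul_mem_mul hum hwm
  | succ m ih =>
    intro f hf hdvd
    by_cases hf0 : f = 0
    · simp [hf0]
    have hf0' : (f : PowerSeries k) ≠ 0 := fun h => hf0 (Subtype.ext h)
    have hord_lt : (f : PowerSeries k).order < ⊤ := order_finite_iff_ne_zero.mpr hf0'
    obtain ⟨N, hN⟩ : ∃ N : ℕ, (f : PowerSeries k).order = (N : ℕ∞) := by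
      cases hord : (f : PowerSeries k).order with
      | top => rw [hord] at hord_lt; exact absurd rfl (ne_of_lt hord_lt)
      | coe N => exact ⟨N, rfl⟩
    have hmaxN : ((max (aₙ+1) (2*c - (m+1)) : ℕ) : ℕ∞) ≤ ((N : ℕ) : ℕ∞) := by
      rw [← hN]
      exact nat_le_order _ _ (fun i hi => (X_pow_dvd_iff.mp hdvd) i hi)
    have hmaxN' : max (aₙ+1) (2*c - (m+1)) ≤ N := by exact_mod_cast hmaxN
    have hNan : aₙ + 1 ≤ N := le_trans (le_max_left _ _) hmaxN'
    have hNv : N ∈ vset (mIdeal R) := ⟨f, hf, hN⟩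
    have hNv2 : N ∈ vset ((mIdeal R) ^ 2) := by
      by_contra hcon
      have := han.2 ⟨hNv, hcon⟩
      omega
    obtain ⟨g, hg2, hgN⟩ := hNv2
    have hg0 : (g : PowerSeries k) ≠ 0 := by
      intro h0
      rw [h0] at hgN; simp at hgN
    have hβ : coeff N (g : PowerSeries k) ≠ 0 := (order_eq_nat.mp hgN).1
    set α := coeff N (f : PowerSeries k) with hα
    set s : R := algebraMap k R (α * (coeff N (g : PowerSeries k))⁻¹) with hs
    set f' : R := f - s * g with hf'
    have hsg : s * g ∈ (mIdeal R) ^ 2 := Ideal.mul_mem_left _ _ hg2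
    have hf'm : f' ∈ mIdeal R := by
      apply Ideal.sub_mem _ hf
      exact Ideal.pow_le_self (by norm_num) hsg
    have hcoe : (f' : PowerSeries k) =
        (f : PowerSeries k) - PowerSeries.C (α * (coeff N (g : PowerSeries k))⁻¹) * g := by
      simp only [hf', hs, Subalgebra.coe_sub, MulMemClass.coe_mul,
        Subalgebra.coe_algebraMap, map_mul, PowerSeries.C_eq_algebraMap]
    have hdvd' : (X : PowerSeries k) ^ (max (aₙ+1) (2*c - m)) ∣ (f' : PowerSeries k) := by
      rw [X_pow_dvd_iff]
      intro i hi
      have hiN : i ≤ N := by omega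
      rw [hcoe, map_sub, coeff_C_mul]
      rcases lt_or_eq_of_le hiN with hlt | heq
      · rw [coeff_of_lt_order i (by rw [hN]; exact_mod_cast hlt),
            coeff_of_lt_order i (by rw [hgN]; exact_mod_cast hlt)]
        ring
      · subst heq
        rw [← hα, mul_assoc, inv_mul_cancel₀ hβ, mul_one, sub_self]
    have hfeq : f = f' + s * g := by rw [hf']; ring
    rw [hfeq]
    exact Ideal.add_mem _ (ih f' hf'm hdvd') hsg

end Aux

/-- with conductor degree `c_R`, `a_n = max(v(𝔪)\v(𝔪²))` and
`d = max{a_n+1, c_R}`: if `y₁,…,y_n` generate `𝔪`, then the truncations of the `yᵢ`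
at degree `d` (polynomials in `t`) lie in `R` and again generate `𝔪`. -/
theorem truncated_generators {k : Type*} [Field k]
    (R : Subalgebra k (PowerSeries k)) (c : ℕ) (hc1 : 1 ≤ c)
    (hcond : ∀ f : PowerSeries k, (X : PowerSeries k) ^ c * f ∈ R)
    (hleast : ∀ c' : ℕ, (∀ f : PowerSeries k, (X : PowerSeries k) ^ c' * f ∈ R) → c ≤ c')
    (aₙ : ℕ) (han : IsGreatest (vset (mIdeal R) \ vset ((mIdeal R) ^ 2)) aₙ)
    (d : ℕ) (hd : d = max (aₙ + 1) c)
    (n : ℕ) (y : Fin n → R) (hy : Ideal.span (Set.range y) = mIdeal R) :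
    ∃ ty : Fin n → R,
      (∀ i, (ty i : PowerSeries k) = ((trunc d (y i : PowerSeries k) : Polynomial k) :
        PowerSeries k)) ∧
      Ideal.span (Set.range ty) = mIdeal R := by
  have hcd : c ≤ d := hd ▸ le_max_right _ _
  have had : aₙ + 1 ≤ d := hd ▸ le_max_left _ _
  -- the remainder `y i - trunc d (y i)` is divisible by `X^d`
  have hdvd_rem : ∀ i, (X : PowerSeries k) ^ d ∣
      ((y i : PowerSeries k) - ((trunc d (y i : PowerSeries k) : Polynomial k) :
        PowerSeries k)) := by
    intro i
    rw [X_pow_dvd_iff]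
    intro m hm
    rw [map_sub, Polynomial.coeff_coe, coeff_trunc, if_pos hm, sub_self]
  -- truncations are in R
  have hmem : ∀ i, ((trunc d (y i : PowerSeries k) : Polynomial k) : PowerSeries k) ∈ R := by
    intro i
    obtain ⟨g, hg⟩ := (pow_dvd_pow (X : PowerSeries k) hcd).trans (hdvd_rem i)
    have : ((trunc d (y i : PowerSeries k) : Polynomial k) : PowerSeries k)
        = (y i : PowerSeries k) - (X : PowerSeries k) ^ c * g := by
      rw [← hg]; ring
    rw [this]
    exact sub_mem (y i).2 (hcond g)
  refine ⟨fun i => ⟨_, hmem i⟩, fun i => rfl, ?_⟩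
  set ty : Fin n → R := fun i => ⟨_, hmem i⟩ with hty
  set z : Fin n → R := fun i => y i - ty i with hz
  have hzdvd : ∀ i, (X : PowerSeries k) ^ d ∣ (z i : PowerSeries k) := by
    intro i
    simpa [hz, hty] using hdvd_rem i
  have hzcc : ∀ i, z i ∈ mIdeal R := by
    intro i
    rw [mem_mIdeal_iff']
    have := (X_pow_dvd_iff.mp (hzdvd i)) 0 (by omega)
    simpa [coeff_zero_eq_constantCoeff] using this
  have hymem : ∀ i, y i ∈ mIdeal R := by
    intro i
    rw [← hy]
    exact Ideal.subset_span ⟨i, rfl⟩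
  -- z i ∈ 𝔪²
  have hz2 : ∀ i, z i ∈ (mIdeal R) ^ 2 := by
    intro i
    apply key_sq' hc1 hcond han (2*c) (z i) (hzcc i)
    have hle : max (aₙ+1) (2*c - 2*c) ≤ d := by
      simp only [Nat.sub_self, max_eq_left (Nat.zero_le _)]
      omega
    exact (pow_dvd_pow (X : PowerSeries k) hle).trans (hzdvd i)
  have htymem : ∀ i, ty i ∈ mIdeal R := by
    intro i
    have : ty i = y i - z i := by rw [hz]; ring
    rw [this]
    exact Ideal.sub_mem _ (hymem i) (Ideal.pow_le_self (by norm_num) (hz2 i))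
  -- span ty ≤ 𝔪
  have hle1 : Ideal.span (Set.range ty) ≤ mIdeal R := by
    rw [Ideal.span_le]
    rintro _ ⟨i, rfl⟩
    exact htymem i
  -- 𝔪 ≤ span ty ⊔ 𝔪 • 𝔪
  have hle2 : mIdeal R ≤ Ideal.span (Set.range ty) ⊔ (mIdeal R) • (mIdeal R) := by
    rw [← hy, Ideal.span_le]
    rintro _ ⟨i, rfl⟩
    have : y i = ty i + z i := by rw [hz]; ring
    rw [this]
    apply Submodule.add_mem
    · exact Submodule.mem_sup_left (Ideal.subset_span ⟨i, rfl⟩)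
    · apply Submodule.mem_sup_right
      rw [hy, smul_eq_mul, ← pow_two]
      exact hz2 i
  -- 𝔪 ≤ jacobson ⊥
  have hjac : mIdeal R ≤ Ideal.jacobson ⊥ := by
    intro x hx
    rw [Ideal.mem_jacobson_bot]
    intro r
    have hxr : x * r ∈ mIdeal R := Ideal.mul_mem_right r _ hx
    have := isUnit_one_add' hcond hxr
    rwa [add_comm] at this
  have hfg : (mIdeal R).FG := by
    rw [← hy]
    exact Submodule.fg_span (Set.finite_range y)
  have := Submodule.le_of_le_smul_of_le_jacobson_bot hfg hjac hle2
  exact le_antisymm hle1 this
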